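/- Let w be a signed two-rowed array on signed alphabets Σ and Σ′ with rows x₁…x_k and y₁…y_k. Then the recording filling Q(w), obtained by placing xᵢ in the box added at the i-th right-insertion step while computing T(y₁⋯y_k), is a super tableau over Σ; moreover T(w) and Q(w) have the same shape and each contains k boxes. -/

import Mathlib

open List

/- ## Signed alphabets and super tableaux

A signed alphabet is modelled by a linearly ordered type together with a
signature map into `ZMod 2`.  A (super) tableau is modelled by its list of
rows, listed from top to bottom. -/

/-- One-row step of super Schensted right insertion: insert `x` into the row,
returning the updated row together with the bumped letter (if any). -/
def insertRow {A : Type*} [LinearOrder A] (sg : A → ZMod 2) :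
    List A → A → List A × Option A
  | [], x => ([x], none)
  | y :: ys, x =>
    if (if sg x = 0 then x < y else x ≤ y) then (x :: ys, some y)
    else
      let p := insertRow sg ys x
      (y :: p.1, p.2)

/-- Super Schensted right insertion of a letter into a tableau (list of rows),
also returning the row index of the box added to the shape. -/
def rInsertIdx {A : Type*} [LinearOrder A] (sg : A → ZMod 2) :
    List (List A) → A → List (List A) × ℕ
  | [], x => ([[x]], 0)
  | r :: rs, x =>
    match insertRow sg r x with
    | (r', none) => (r' :: rs, 0)
    | (r', some y) =>
      let p := rInsertIdx sg rs y
      (r' :: p.1, p.2 + 1)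

/-- Right insertion `t ▷ x`. -/
def rIns {A : Type*} [LinearOrder A] (sg : A → ZMod 2) (t : List (List A)) (x : A) :
    List (List A) :=
  (rInsertIdx sg t x).1

/-- The insertion tableau `T(w)` of a word `w`. -/
def insertWord {A : Type*} [LinearOrder A] (sg : A → ZMod 2) (w : List A) :
    List (List A) :=
  w.foldl (rIns sg) []

/-- The shape of a tableau: the list of its row lengths. -/
def shape {A : Type*} (t : List (List A)) : List ℕ := t.map List.length

/-- Add a box labelled `x` at the end of row `i` (possibly creating a new row). -/
def addBox {B : Type*} : List (List B) → ℕ → B → List (List B)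
  | [], _, x => [[x]]
  | r :: rs, 0, x => (r ++ [x]) :: rs
  | r :: rs, i + 1, x => r :: addBox rs i x

/-- The super-RSK map: a signed two-rowed array is modelled by its list of
columns (couples); the first component of the result is the insertion tableau
`T(w)` of the bottom row, the second is the recording tableau `Q(w)` obtained
by placing the letters of the top row in the successively added boxes. -/
def RSK {A B : Type*} [LinearOrder B] (sg : B → ZMod 2) (w : List (A × B)) :
    List (List B) × List (List A) :=
  w.foldl
    (fun p xy =>
      let q := rInsertIdx sg p.1 xy.2
      (q.1, addBox p.2 q.2 xy.1))
    ([], [])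

/-- Row condition of a super tableau: weakly increasing, with equal adjacent
entries allowed only for letters of signature `0`. -/
def RowOK {A : Type*} [LinearOrder A] (sg : A → ZMod 2) (r : List A) : Prop :=
  r.Chain' fun a b => a < b ∨ (a = b ∧ sg a = 0)

/-- Column condition between a row `r` and the row `r'` directly below it:
weakly increasing along columns, with equal entries allowed only for letters
of signature `1`. -/
def ColsOK {A : Type*} [LinearOrder A] (sg : A → ZMod 2) (r r' : List A) : Prop :=
  ∀ j : ℕ, ∀ b ∈ r[j]?, ∀ a ∈ r'[j]?, b < a ∨ (b = a ∧ sg b = 1)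

/-- Super (semistandard Young) tableau over a signed alphabet. -/
def IsSuperTableau {A : Type*} [LinearOrder A] (sg : A → ZMod 2)
    (t : List (List A)) : Prop :=
  (∀ r ∈ t, r ≠ []) ∧
  (shape t).Chain' (fun p q => q ≤ p) ∧
  (∀ r ∈ t, RowOK sg r) ∧
  t.Chain' (ColsOK sg)

/-- The strict order on couples used for signed two-rowed arrays. -/
def pairLt {A B : Type*} [LinearOrder A] [LinearOrder B]
    (sgA : A → ZMod 2) (p q : A × B) : Prop :=
  p.1 < q.1 ∨ (p.1 = q.1 ∧ ((sgA p.1 = 0 ∧ p.2 < q.2) ∨ (sgA p.1 = 1 ∧ q.2 < p.2)))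

/-- A signed two-rowed array on two signed alphabets, given by its list
of columns: consecutive couples weakly increase, equal consecutive couples
being allowed only when the couple has signature `0`. -/
def IsSignedArray {A B : Type*} [LinearOrder A] [LinearOrder B]
    (sgA : A → ZMod 2) (sgB : B → ZMod 2) (w : List (A × B)) : Prop :=
  w.Chain' fun p q => pairLt sgA p q ∨ (p = q ∧ sgA p.1 + sgB p.2 = 0)

/-- Maximum of a list of naturals. -/
def listMaxN (l : List ℕ) : ℕ := l.foldl max 0

namespace List

variable {α : Type*}

/-- Compatibility: optional indexing. -/
def get? (l : List α) (n : ℕ) : Option α := l[n]?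

@[simp] theorem get?_eq_getElem?' (l : List α) (n : ℕ) : l.get? n = l[n]? := rfl

theorem get?_mem {l : List α} {n : ℕ} {a : α} (h : l.get? n = some a) : a ∈ l :=
  List.mem_of_getElem? h

theorem get?_eq_get {l : List α} {n : ℕ} (h : n < l.length) :
    l.get? n = some (l.get ⟨n, h⟩) := by simp [get?, h]

theorem get?_eq_some {l : List α} {n : ℕ} {a : α} :
    l.get? n = some a ↔ ∃ h : n < l.length, l.get ⟨n, h⟩ = a := by
  simp [get?, getElem?_eq_some_iff]

theorem get?_eq_none {l : List α} {n : ℕ} : l.get? n = none ↔ l.length ≤ n := by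
  simp [get?]

theorem get?_map {β : Type*} (f : α → β) (l : List α) (n : ℕ) :
    (l.map f).get? n = (l.get? n).map f := by simp [get?]

theorem get?_append {l₁ l₂ : List α} {n : ℕ} (hn : n < l₁.length) :
    (l₁ ++ l₂).get? n = l₁.get? n := by simp [get?, getElem?_append_left hn]

theorem get?_set_eq_of_lt (a : α) {n : ℕ} {l : List α} (h : n < l.length) :
    (l.set n a).get? n = some a := by simp [get?, h]

theorem get?_set_ne (a : α) {m n : ℕ} (l : List α) (h : m ≠ n) :
    (l.set m a).get? n = l.get? n := by simp [get?, getElem?_set, h]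

theorem get?_concat_length (l : List α) (a : α) : (l ++ [a]).get? l.length = some a := by
  simp [get?]

theorem get?_of_mem {l : List α} {a : α} (h : a ∈ l) : ∃ n, l.get? n = some a := by
  obtain ⟨n, hn, rfl⟩ := List.getElem_of_mem h
  exact ⟨n, by simp [get?, hn]⟩

theorem get?_cons_succ {a : α} {l : List α} {n : ℕ} : (a :: l).get? (n + 1) = l.get? n := rfl

theorem chain'_cons' {R : α → α → Prop} {x : α} {l : List α} :
    Chain' R (x :: l) ↔ (∀ y ∈ head? l, R x y) ∧ Chain' R l := isChain_cons

@[simp] theorem chain'_nil {R : α → α → Prop} : Chain' R ([] : List α) := IsChain.nil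

@[simp] theorem chain'_singleton {R : α → α → Prop} (a : α) : Chain' R [a] := IsChain.singleton a

theorem chain'_iff_pairwise {R : α → α → Prop} [IsTrans α R] {l : List α} :
    Chain' R l ↔ Pairwise R l := by
  unfold Chain'; exact isChain_iff_pairwise

theorem chain'_iff_get {R : α → α → Prop} {l : List α} :
    Chain' R l ↔ ∀ (i : ℕ) (h : i < length l - 1),
      R (get l ⟨i, by omega⟩) (get l ⟨i + 1, by omega⟩) := by
  unfold Chain'; rw [isChain_iff_getElem]; constructor
  · intro h i hi; exact h i (by omega)
  · intro h i hi; exact h i (by omega)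

theorem Chain'.tail {R : α → α → Prop} {l : List α} (h : Chain' R l) : Chain' R l.tail :=
  IsChain.tail h

end List

section AuxBasic

variable {A : Type*} [LinearOrder A] {sg : A → ZMod 2}

/-- The strict comparison used by super insertion. -/
def ltp (sg : A → ZMod 2) (x y : A) : Prop := if sg x = 0 then x < y else x ≤ y

lemma zmod2_cases (z : ZMod 2) : z = 0 ∨ z = 1 := by revert z; decide

lemma ltp_of_lt {x y : A} (h : x < y) : ltp sg x y := by
  unfold ltp; split
  · exact h
  · exact h.le

lemma ltp.le {x y : A} (h : ltp sg x y) : x ≤ y := by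
  unfold ltp at h; split at h
  · exact h.le
  · exact h

lemma ltp_of_ltp_le {x y z : A} (h1 : ltp sg x y) (h2 : y ≤ z) : ltp sg x z := by
  unfold ltp at h1 ⊢; split at h1
  · rename_i h; rw [if_pos h]; exact lt_of_lt_of_le h1 h2
  · rename_i h; rw [if_neg h]; exact le_trans h1 h2

lemma ltp_trans {x y z : A} (h1 : ltp sg x y) (h2 : ltp sg y z) : ltp sg x z :=
  ltp_of_ltp_le h1 h2.le

lemma not_ltp_iff {x y : A} : ¬ ltp sg y x ↔ (x < y ∨ (x = y ∧ sg x = 0)) := by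
  unfold ltp
  rcases zmod2_cases (sg y) with h | h
  · rw [if_pos h, not_lt]
    constructor
    · intro hle
      rcases lt_or_eq_of_le hle with h' | h'
      · exact Or.inl h'
      · exact Or.inr ⟨h', h' ▸ h⟩
    · rintro (h' | ⟨rfl, _⟩)
      · exact h'.le
      · exact le_rfl
  · rw [if_neg (by rw [h]; decide), not_le]
    constructor
    · intro h'; exact Or.inl h'
    · rintro (h' | ⟨rfl, h0⟩)
      · exact h'
      · rw [h] at h0; exact absurd h0 (by decide)

lemma ltp_iff_col {x y : A} : ltp sg x y ↔ (x < y ∨ (x = y ∧ sg x = 1)) := by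
  unfold ltp
  rcases zmod2_cases (sg x) with h | h
  · rw [if_pos h]
    constructor
    · intro h'; exact Or.inl h'
    · rintro (h' | ⟨rfl, h0⟩)
      · exact h'
      · rw [h] at h0; exact absurd h0 (by decide)
  · rw [if_neg (by rw [h]; decide)]
    constructor
    · intro hle
      rcases lt_or_eq_of_le hle with h' | h'
      · exact Or.inl h'
      · exact Or.inr ⟨h', h⟩
    · rintro (h' | ⟨rfl, _⟩)
      · exact h'.le
      · exact le_rfl

lemma ltp_of_ltp_not_ltp {x y z : A} (h1 : ltp sg x y) (h2 : ¬ ltp sg z y) : ltp sg x z := by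
  rcases not_ltp_iff.1 h2 with h | ⟨h', _⟩
  · exact ltp_of_ltp_le h1 h.le
  · exact h' ▸ h1

lemma not_ltp_trans {x y z : A} (h1 : ¬ ltp sg y x) (h2 : ¬ ltp sg z y) : ¬ ltp sg z x := by
  rw [not_ltp_iff] at h1 h2 ⊢
  rcases h1 with h1 | ⟨rfl, e1⟩
  · rcases h2 with h2 | ⟨rfl, _⟩
    · exact Or.inl (lt_trans h1 h2)
    · exact Or.inl h1
  · rcases h2 with h2 | ⟨rfl, e2⟩
    · exact Or.inl h2
    · exact Or.inr ⟨rfl, e1⟩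

lemma chain'_iff_forall_get? {α : Type*} {R : α → α → Prop} (hR : Transitive R) {l : List α} :
    l.Chain' R ↔ ∀ j k a b, j < k → l.get? j = some a → l.get? k = some b → R a b := by
  constructor
  · intro h j k a b hjk ha hb
    haveI : IsTrans α R := ⟨hR⟩
    have hp := (List.chain'_iff_pairwise).1 h
    rw [List.pairwise_iff_get] at hp
    rw [List.get?_eq_some] at ha hb
    obtain ⟨hj, rfl⟩ := ha; obtain ⟨hk, rfl⟩ := hb
    exact hp _ _ hjk
  · intro h
    rw [List.chain'_iff_get]
    intro i hi
    exact h i (i+1) _ _ (Nat.lt_succ_self i) (List.get?_eq_get _) (List.get?_eq_get _)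

lemma rowOK_iff_get? {r : List A} :
    RowOK sg r ↔ ∀ j k a b, j < k → r.get? j = some a → r.get? k = some b → ¬ ltp sg b a := by
  unfold RowOK
  have : (fun a b : A => a < b ∨ (a = b ∧ sg a = 0)) = fun a b => ¬ ltp sg b a := by
    funext a b; rw [eq_iff_iff, ← not_ltp_iff]
  rw [this, chain'_iff_forall_get? (R := fun a b => ¬ ltp sg b a)
    (fun a b c h1 h2 => not_ltp_trans h1 h2)]

end AuxBasic
section AuxInsertRow

variable {A : Type*} [LinearOrder A] {sg : A → ZMod 2}

lemma colsOK_iff {r r' : List A} :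
    ColsOK sg r r' ↔ ∀ j b a, r.get? j = some b → r'.get? j = some a → ltp sg b a := by
  unfold ColsOK
  constructor
  · intro h j b a hb ha
    exact ltp_iff_col.2 (h j b hb a ha)
  · intro h j b hb a ha
    exact ltp_iff_col.1 (h j b a hb ha)

lemma insertRow_spec (sg : A → ZMod 2) (r : List A) (x : A) :
    (insertRow sg r x = (r ++ [x], none) ∧ ∀ z ∈ r, ¬ ltp sg x z) ∨
    (∃ j y, r.get? j = some y ∧ ltp sg x y ∧
      (∀ k a, k < j → r.get? k = some a → ¬ ltp sg x a) ∧
      insertRow sg r x = (r.set j x, some y)) := by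
  induction r with
  | nil => exact Or.inl ⟨rfl, by simp⟩
  | cons y ys ih =>
    by_cases h : ltp sg x y
    · refine Or.inr ⟨0, y, rfl, h, by omega, ?_⟩
      unfold ltp at h
      show (if (if sg x = 0 then x < y else x ≤ y) then _ else _) = _
      rw [if_pos h]
      rfl
    · have he : insertRow sg (y :: ys) x
          = (y :: (insertRow sg ys x).1, (insertRow sg ys x).2) := by
        unfold ltp at h
        show (if (if sg x = 0 then x < y else x ≤ y) then _ else _) = _
        rw [if_neg h]
      rcases ih with ⟨he', hall⟩ | ⟨j, z, hg, hl, hmin, he'⟩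
      · refine Or.inl ⟨?_, ?_⟩
        · rw [he, he']
          rfl
        · intro z hz
          rcases List.mem_cons.1 hz with rfl | hz
          · exact h
          · exact hall z hz
      · refine Or.inr ⟨j + 1, z, hg, hl, ?_, ?_⟩
        · intro k a hk ha
          cases k with
          | zero => cases ha; exact h
          | succ k => exact hmin k a (by omega) ha
        · rw [he, he']
          rfl

lemma insertRow_append (sg : A → ZMod 2) {r : List A} {x : A}
    (h : ∀ z ∈ r, ¬ ltp sg x z) : insertRow sg r x = (r ++ [x], none) := by
  rcases insertRow_spec sg r x with ⟨he, _⟩ | ⟨j, y, hg, hl, _, _⟩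
  · exact he
  · exact absurd hl (h y (List.get?_mem hg))

lemma rowOK_append {r : List A} {x : A} (h : RowOK sg r)
    (hall : ∀ z ∈ r, ¬ ltp sg x z) : RowOK sg (r ++ [x]) := by
  rw [rowOK_iff_get?] at h ⊢
  intro j k a b hjk ha hb
  by_cases hk : k < r.length
  · rw [List.get?_append hk] at hb
    rw [List.get?_append (by omega)] at ha
    exact h j k a b hjk ha hb
  · have hkeq : k = r.length := by
      by_contra hne
      have : r.length + 1 ≤ k := by omega
      rw [List.get?_eq_none.2 (by simp; omega)] at hb
      cases hb
    subst hkeq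
    rw [List.get?_append (by omega)] at ha
    have : b = x := by
      have := List.get?_concat_length r x
      rw [this] at hb; cases hb; rfl
    subst this
    exact hall a (List.get?_mem ha)

lemma rowOK_set {r : List A} {x y : A} {j : ℕ} (h : RowOK sg r)
    (hg : r.get? j = some y) (hl : ltp sg x y)
    (hmin : ∀ k a, k < j → r.get? k = some a → ¬ ltp sg x a) :
    RowOK sg (r.set j x) := by
  rw [rowOK_iff_get?] at h ⊢
  have hjlen : j < r.length := (List.get?_eq_some.1 hg).1
  intro j' k' a b hjk ha hb
  rcases eq_or_ne j' j with rfl | hj'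
  · rw [List.get?_set_eq_of_lt _ hjlen] at ha
    cases ha
    rw [List.get?_set_ne _ _ (show j' ≠ k' by omega)] at hb
    intro hba
    exact h j' k' y b hjk hg hb (ltp_trans hba hl)
  · rw [List.get?_set_ne _ _ (Ne.symm hj')] at ha
    rcases eq_or_ne k' j with rfl | hk'
    · rw [List.get?_set_eq_of_lt _ hjlen] at hb
      cases hb
      exact hmin j' a hjk ha
    · rw [List.get?_set_ne _ _ (Ne.symm hk')] at hb
      exact h j' k' a b hjk ha hb

/-- Position of insertion is `≤ j` whenever the entry at `j` (if any) satisfies the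
bump condition. Formulated for both outcomes. -/
lemma insertRow_pos_le (sg : A → ZMod 2) {r : List A} {x : A} {j : ℕ}
    (hj : ∀ a, r.get? j = some a → ltp sg x a) :
    (insertRow sg r x = (r ++ [x], none) ∧ r.length ≤ j) ∨
    (∃ j' y, j' ≤ j ∧ r.get? j' = some y ∧ ltp sg x y ∧
      (∀ k a, k < j' → r.get? k = some a → ¬ ltp sg x a) ∧
      insertRow sg r x = (r.set j' x, some y)) := by
  rcases insertRow_spec sg r x with ⟨he, hall⟩ | ⟨j', y, hg, hl, hmin, he⟩
  · left
    refine ⟨he, ?_⟩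
    by_contra hlt
    push_neg at hlt
    obtain ⟨a, ha⟩ : ∃ a, r.get? j = some a := by
      rw [List.get?_eq_get hlt]; exact ⟨_, rfl⟩
    exact hall a (List.get?_mem ha) (hj a ha)
  · right
    refine ⟨j', y, ?_, hg, hl, hmin, he⟩
    by_contra hlt
    push_neg at hlt
    have hjlen : j < r.length := by
      have := List.get?_eq_some.1 hg |>.1
      omega
    obtain ⟨a, ha⟩ : ∃ a, r.get? j = some a := by
      rw [List.get?_eq_get hjlen]; exact ⟨_, rfl⟩
    exact hmin j a hlt ha (hj a ha)

end AuxInsertRow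
section AuxMain

variable {A : Type*} [LinearOrder A] {sg : A → ZMod 2}

/-- Increment the `i`-th part of a shape (adding a part if needed). -/
def incr : List ℕ → ℕ → List ℕ
  | [], _ => [1]
  | n :: ns, 0 => (n + 1) :: ns
  | n :: ns, k + 1 => n :: incr ns k

lemma incr_sum : ∀ (s : List ℕ) (i : ℕ), (incr s i).sum = s.sum + 1
  | [], _ => by simp [incr]
  | n :: ns, 0 => by simp [incr]; omega
  | n :: ns, k + 1 => by simp [incr, incr_sum ns k]; omega

lemma lt_length_incr : ∀ (s : List ℕ) (i : ℕ), i ≤ s.length → i < (incr s i).length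
  | [], i, h => by
    have : i = 0 := by simpa using h
    subst this; simp [incr]
  | n :: ns, 0, _ => by simp [incr]
  | n :: ns, k + 1, h => by
    simpa [incr] using lt_length_incr ns k (by simpa using h)

lemma shape_cons (r : List A) (rs : List (List A)) :
    shape (r :: rs) = r.length :: shape rs := rfl

lemma shape_length {C : Type*} (t : List (List C)) : (shape t).length = t.length :=
  List.length_map _

lemma shape_get? {C : Type*} (t : List (List C)) (k : ℕ) :
    (shape t).get? k = (t.get? k).map List.length :=
  List.get?_map _ _ _

lemma tableau_tail {r : List A} {rs : List (List A)}
    (h : IsSuperTableau sg (r :: rs)) : IsSuperTableau sg rs := by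
  obtain ⟨h1, h2, h3, h4⟩ := h
  exact ⟨fun r' hr' => h1 r' (List.mem_cons_of_mem _ hr'),
    (by rw [shape_cons] at h2; exact h2.tail),
    fun r' hr' => h3 r' (List.mem_cons_of_mem _ hr'), h4.tail⟩

lemma ltp_left_of_bump {r : List A} {x y b : A} {j k : ℕ} (hr : RowOK sg r)
    (hg : r.get? j = some y) (hl : ltp sg x y)
    (hmin : ∀ k a, k < j → r.get? k = some a → ¬ ltp sg x a)
    (hk : k < j) (hb : r.get? k = some b) : ltp sg b y := by
  have h1 : ¬ ltp sg y b := rowOK_iff_get?.1 hr k j b y hk hb hg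
  rcases not_ltp_iff.1 h1 with hlt | ⟨heq, _⟩
  · exact ltp_of_lt hlt
  · subst heq
    exact absurd hl (hmin k b hk hb)

lemma rInsertIdx_cons_none {r r' : List A} {rs : List (List A)} {x : A}
    (he : insertRow sg r x = (r', none)) :
    rInsertIdx sg (r :: rs) x = (r' :: rs, 0) := by
  simp [rInsertIdx, he]

lemma rInsertIdx_cons_some {r r' : List A} {rs : List (List A)} {x y : A}
    (he : insertRow sg r x = (r', some y)) :
    rInsertIdx sg (r :: rs) x
      = (r' :: (rInsertIdx sg rs y).1, (rInsertIdx sg rs y).2 + 1) := by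
  simp [rInsertIdx, he]

/-- The fundamental lemma: right insertion preserves super tableaux, and the
new shape is the old shape with one box added at the returned row index. -/
lemma rInsert_tableau :
    ∀ (t : List (List A)), IsSuperTableau sg t → ∀ (x : A),
      IsSuperTableau sg (rInsertIdx sg t x).1 ∧
      shape (rInsertIdx sg t x).1 = incr (shape t) (rInsertIdx sg t x).2 ∧
      (rInsertIdx sg t x).2 ≤ t.length := by
  intro t
  induction t with
  | nil =>
    intro _ x
    have : rInsertIdx sg ([] : List (List A)) x = ([[x]], 0) := rfl
    rw [this]
    refine ⟨⟨?_, ?_, ?_, ?_⟩, ?_, ?_⟩ <;> simp [shape, RowOK, incr]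
  | cons r rs ih =>
    intro ht x
    have htail := tableau_tail ht
    have hr : RowOK sg r := ht.2.2.1 r (List.mem_cons_self)
    have hrne : r ≠ [] := ht.1 r (List.mem_cons_self)
    rcases insertRow_spec sg r x with ⟨he, hall⟩ | ⟨j, y, hg, hl, hmin, he⟩
    · -- append at the end of the first row
      rw [rInsertIdx_cons_none he]
      have hsh : shape ((r ++ [x]) :: rs) = (r.length + 1) :: shape rs := by
        simp [shape_cons]
      refine ⟨⟨?_, ?_, ?_, ?_⟩, ?_, ?_⟩
      · intro r' hr'
        rcases List.mem_cons.1 hr' with rfl | hr'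
        · simp
        · exact ht.1 r' (List.mem_cons_of_mem _ hr')
      · rw [hsh, List.chain'_cons']
        have h2 := ht.2.1
        rw [shape_cons, List.chain'_cons'] at h2
        exact ⟨fun b hb => le_trans (h2.1 b hb) (Nat.le_succ _), h2.2⟩
      · intro r' hr'
        rcases List.mem_cons.1 hr' with rfl | hr'
        · exact rowOK_append hr hall
        · exact ht.2.2.1 r' (List.mem_cons_of_mem _ hr')
      · rw [List.chain'_cons']
        have h4 := ht.2.2.2
        rw [List.chain'_cons'] at h4
        refine ⟨?_, h4.2⟩
        intro r₁ hr₁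
        rw [colsOK_iff]
        intro k b a hb ha
        have hk : k < r₁.length := (List.get?_eq_some.1 ha).1
        have hlen₁ : r₁.length ≤ r.length := by
          have h2 := ht.2.1
          rw [shape_cons, List.chain'_cons'] at h2
          have := h2.1 r₁.length ?_
          · exact this
          · rcases rs with _ | ⟨r₂, rs'⟩
            · simp at hr₁
            · simp at hr₁; subst hr₁; simp [shape_cons]
        rw [List.get?_append (by omega)] at hb
        exact colsOK_iff.1 (h4.1 r₁ hr₁) k b a hb ha
      · rw [hsh, shape_cons, incr]
      · simp
    · -- bump: x replaces y at position j, y goes to the lower rows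
      have hjlen : j < r.length := (List.get?_eq_some.1 hg).1
      rw [rInsertIdx_cons_some he]
      obtain ⟨htab₁, hsh₁, hi₁⟩ := ih htail y
      set rs₁ := (rInsertIdx sg rs y).1 with hrs₁
      set i' := (rInsertIdx sg rs y).2 with hi'
      -- the head row of rs₁ and where y lands
      have hhead : ∃ h₁ j₁, j₁ ≤ j ∧ rs₁.head? = some h₁ ∧
          (∀ k a, h₁.get? k = some a → k ≠ j₁ → rs.head?.bind (·.get? k) = some a) ∧
          h₁.get? j₁ = some y ∧ h₁.length ≤ r.length := by
        rcases rs with _ | ⟨r₁, rs'⟩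
        · refine ⟨[y], 0, Nat.zero_le _, by simp [hrs₁, rInsertIdx], ?_, rfl, ?_⟩
          · intro k a ha hk
            cases k with
            | zero => exact absurd rfl hk
            | succ k => simp at ha
          · have : 0 < r.length := List.length_pos_iff.2 hrne
            exact this
        · have hcol : ColsOK sg r r₁ := by
            have h4 := ht.2.2.2
            rw [List.chain'_cons'] at h4
            exact h4.1 r₁ (by simp)
          have hj : ∀ a, r₁.get? j = some a → ltp sg y a := by
            intro a ha
            exact colsOK_iff.1 hcol j y a hg ha
          have hlen₁ : r₁.length ≤ r.length := by
            have h2 := ht.2.1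
            rw [shape_cons, List.chain'_cons'] at h2
            exact h2.1 r₁.length (by simp [shape_cons])
          rcases insertRow_pos_le sg hj with ⟨he₁, hle₁⟩ | ⟨j₁, z₁, hj₁, hg₁, hl₁, hmin₁, he₁⟩
          · refine ⟨r₁ ++ [y], r₁.length, hle₁, ?_, ?_, ?_, ?_⟩
            · rw [hrs₁, rInsertIdx_cons_none he₁]
              rfl
            · intro k a ha hk
              have hk' : k < r₁.length := by
                have := (List.get?_eq_some.1 ha).1
                simp at this
                omega
              rw [List.get?_append hk'] at ha
              simpa using ha
            · exact List.get?_concat_length r₁ y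
            · simp; omega
          · refine ⟨r₁.set j₁ y, j₁, hj₁, ?_, ?_, ?_, ?_⟩
            · rw [hrs₁, rInsertIdx_cons_some he₁]
              rfl
            · intro k a ha hk
              rw [List.get?_set_ne _ _ (Ne.symm hk)] at ha
              simpa using ha
            · exact List.get?_set_eq_of_lt _ (List.get?_eq_some.1 hg₁).1
            · simp; omega
      obtain ⟨h₁, j₁, hj₁j, hh₁, hunch, hyat, hh₁len⟩ := hhead
      have hrowset : RowOK sg (r.set j x) := rowOK_set hr hg hl hmin
      -- the key vertical compatibility
      have hcolnew : ColsOK sg (r.set j x) h₁ := by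
        rw [colsOK_iff]
        intro k b a hb ha
        rcases eq_or_ne k j₁ with rfl | hkj₁
        · have haY : a = y := by rw [hyat] at ha; cases ha; rfl
          subst haY
          rcases eq_or_ne k j with rfl | hkj
          · rw [List.get?_set_eq_of_lt _ hjlen] at hb
            cases hb; exact hl
          · have hkj' : k < j := lt_of_le_of_ne hj₁j hkj
            rw [List.get?_set_ne _ _ (Ne.symm hkj)] at hb
            exact ltp_left_of_bump hr hg hl hmin hkj' hb
        · have ha' : rs.head?.bind (·.get? k) = some a := hunch k a ha hkj₁
          obtain ⟨r₁, hr₁head, har₁⟩ : ∃ r₁, rs.head? = some r₁ ∧ r₁.get? k = some a := by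
            rcases rs with _ | ⟨r₁, rs'⟩
            · simp at ha'
            · exact ⟨r₁, rfl, by simpa using ha'⟩
          have hcol : ColsOK sg r r₁ := by
            have h4 := ht.2.2.2
            rw [List.chain'_cons'] at h4
            exact h4.1 r₁ (by rcases rs with _|_ <;> simp_all)
          rcases eq_or_ne k j with rfl | hkj
          · rw [List.get?_set_eq_of_lt _ hjlen] at hb
            cases hb
            exact ltp_trans hl (colsOK_iff.1 hcol k y a hg har₁)
          · rw [List.get?_set_ne _ _ (Ne.symm hkj)] at hb
            exact colsOK_iff.1 hcol k b a hb har₁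
      refine ⟨⟨?_, ?_, ?_, ?_⟩, ?_, ?_⟩
      · intro r' hr'
        rcases List.mem_cons.1 hr' with rfl | hr'
        · intro hc
          have := congrArg List.length hc
          simp at this
          exact hrne this
        · exact htab₁.1 r' hr'
      · rw [shape_cons, List.chain'_cons', List.length_set]
        refine ⟨?_, htab₁.2.1⟩
        intro b hb
        have : (shape rs₁).head? = some h₁.length := by
          rcases rs₁ with _ | ⟨h₁', rs₁'⟩
          · simp at hh₁
          · simp at hh₁; subst hh₁; simp [shape_cons]
        rw [this] at hb
        cases hb
        exact hh₁len
      · intro r' hr'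
        rcases List.mem_cons.1 hr' with rfl | hr'
        · exact hrowset
        · exact htab₁.2.2.1 r' hr'
      · rw [List.chain'_cons']
        refine ⟨?_, htab₁.2.2.2⟩
        intro h₁' hh₁'
        rw [hh₁] at hh₁'
        cases hh₁'
        exact hcolnew
      · rw [shape_cons, shape_cons, incr, List.length_set, hsh₁]
      · simp
        omega

end AuxMain
section AuxBump

variable {A : Type*} [LinearOrder A] {sg : A → ZMod 2}

/-- Row bumping lemma, weak case: inserting `y` then `y'` with `y ⊴ y'`
adds the second box weakly above the first one. -/
lemma bump_le :
    ∀ (t : List (List A)), IsSuperTableau sg t → ∀ y y' : A, ¬ ltp sg y' y →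
      (rInsertIdx sg (rInsertIdx sg t y).1 y').2 ≤ (rInsertIdx sg t y).2 := by
  intro t
  induction t with
  | nil =>
    intro _ y y' h
    have h1 : rInsertIdx sg ([] : List (List A)) y = ([[y]], 0) := rfl
    rw [h1]
    have h2 : insertRow sg [y] y' = ([y] ++ [y'], none) := by
      apply insertRow_append
      intro z hz
      rcases List.mem_singleton.1 hz with rfl
      exact h
    rw [rInsertIdx_cons_none h2]
  | cons r rs ih =>
    intro ht y y' h
    have htail := tableau_tail ht
    have hr : RowOK sg r := ht.2.2.1 r (List.mem_cons_self)
    rcases insertRow_spec sg r y with ⟨he, hall⟩ | ⟨j, z, hg, hl, hmin, he⟩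
    · rw [rInsertIdx_cons_none he]
      have h2 : insertRow sg (r ++ [y]) y' = ((r ++ [y]) ++ [y'], none) := by
        apply insertRow_append
        intro w hw
        rcases List.mem_append.1 hw with hw | hw
        · exact not_ltp_trans (hall w hw) h
        · rcases List.mem_singleton.1 hw with rfl
          exact h
      rw [rInsertIdx_cons_none h2]
    · have hjlen : j < r.length := (List.get?_eq_some.1 hg).1
      rw [rInsertIdx_cons_some he]
      rcases insertRow_spec sg (r.set j y) y' with ⟨he₂, _⟩ | ⟨j₂, z₂, hg₂, hl₂, hmin₂, he₂⟩
      · rw [rInsertIdx_cons_none he₂]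
        exact Nat.zero_le _
      · have hj₂ : j < j₂ := by
          by_contra hle
          push_neg at hle
          rcases eq_or_lt_of_le hle with rfl | hlt
          · rw [List.get?_set_eq_of_lt _ hjlen] at hg₂
            cases hg₂
            exact h hl₂
          · rw [List.get?_set_ne _ _ (by omega)] at hg₂
            exact h (ltp_of_ltp_not_ltp hl₂ (hmin j₂ z₂ hlt hg₂))
        have hg₂' : r.get? j₂ = some z₂ := by
          rw [List.get?_set_ne _ _ (by omega)] at hg₂
          exact hg₂
        have hz₂ : ¬ ltp sg z₂ z := rowOK_iff_get?.1 hr j j₂ z z₂ hj₂ hg hg₂'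
        rw [rInsertIdx_cons_some he₂]
        exact Nat.succ_le_succ (ih htail z z₂ hz₂)

/-- Row bumping lemma, strict case: inserting `y` then `y'` with `y' ⊴' y`
adds the second box strictly below the first one. -/
lemma bump_gt :
    ∀ (t : List (List A)), IsSuperTableau sg t → ∀ y y' : A, ltp sg y' y →
      (rInsertIdx sg t y).2 < (rInsertIdx sg (rInsertIdx sg t y).1 y').2 := by
  intro t
  induction t with
  | nil =>
    intro _ y y' h
    have h1 : rInsertIdx sg ([] : List (List A)) y = ([[y]], 0) := rfl
    rw [h1]
    rcases insertRow_spec sg [y] y' with ⟨_, hall⟩ | ⟨j₂, z₂, hg₂, hl₂, hmin₂, he₂⟩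
    · exact absurd h (hall y (List.mem_singleton_self y))
    · rw [rInsertIdx_cons_some he₂]
      exact Nat.succ_pos _
  | cons r rs ih =>
    intro ht y y' h
    have htail := tableau_tail ht
    have hr : RowOK sg r := ht.2.2.1 r (List.mem_cons_self)
    rcases insertRow_spec sg r y with ⟨he, hall⟩ | ⟨j, z, hg, hl, hmin, he⟩
    · rw [rInsertIdx_cons_none he]
      rcases insertRow_spec sg (r ++ [y]) y' with ⟨_, hall₂⟩ | ⟨j₂, z₂, hg₂, hl₂, hmin₂, he₂⟩
      · exact absurd h (hall₂ y (List.mem_append.2 (Or.inr (List.mem_singleton_self y))))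
      · rw [rInsertIdx_cons_some he₂]
        exact Nat.succ_pos _
    · have hjlen : j < r.length := (List.get?_eq_some.1 hg).1
      rw [rInsertIdx_cons_some he]
      have hyget : (r.set j y).get? j = some y := List.get?_set_eq_of_lt _ hjlen
      rcases insertRow_spec sg (r.set j y) y' with ⟨_, hall₂⟩ | ⟨j₂, z₂, hg₂, hl₂, hmin₂, he₂⟩
      · exact absurd h (hall₂ y (List.get?_mem hyget))
      · have hj₂ : j₂ ≤ j := by
          by_contra hlt
          push_neg at hlt
          exact hmin₂ j y hlt hyget h
        have hz₂ : ltp sg z₂ z := by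
          rcases eq_or_lt_of_le hj₂ with rfl | hlt
          · rw [hyget] at hg₂
            cases hg₂
            exact hl
          · have hg₂' : r.get? j₂ = some z₂ := by
              rw [List.get?_set_ne _ _ (by omega)] at hg₂
              exact hg₂
            exact ltp_left_of_bump hr hg hl hmin hlt hg₂'
        rw [rInsertIdx_cons_some he₂]
        exact Nat.succ_lt_succ (ih htail z z₂ hz₂)

end AuxBump
section AuxAddBox

lemma chain'_iff_get?' {α : Type*} {R : α → α → Prop} {l : List α} :
    l.Chain' R ↔ ∀ k a b, l.get? k = some a → l.get? (k+1) = some b → R a b := by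
  rw [List.chain'_iff_get]
  constructor
  · intro h k a b ha hb
    obtain ⟨hk, rfl⟩ := List.get?_eq_some.1 ha
    obtain ⟨hk', rfl⟩ := List.get?_eq_some.1 hb
    exact h k (by omega)
  · intro h i hi
    exact h i _ _ (List.get?_eq_get (by omega)) (List.get?_eq_get (by omega))

lemma addBox_get? {C : Type*} :
    ∀ (q : List (List C)) (i : ℕ) (x : C), i ≤ q.length → ∀ k,
      (addBox q i x).get? k
        = if k = i then some (((q.get? i).getD []) ++ [x]) else q.get? k := by
  intro q
  induction q with
  | nil =>
    intro i x hi k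
    have : i = 0 := by simpa using hi
    subst this
    rcases k with _ | k <;> simp [addBox]
  | cons r q' ih =>
    intro i x hi k
    rcases i with _ | i
    · rcases k with _ | k <;> simp [addBox]
    · rcases k with _ | k
      · simp [addBox]
      · have hi' : i ≤ q'.length := by simpa using hi
        simp only [addBox, List.get?_cons_succ]
        rw [ih i x hi' k]
        simp

lemma shape_addBox {C : Type*} :
    ∀ (q : List (List C)) (i : ℕ) (x : C), shape (addBox q i x) = incr (shape q) i := by
  intro q
  induction q with
  | nil => intro i x; cases i <;> rfl
  | cons r q' ih =>
    intro i x
    cases i with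
    | zero => simp [addBox, shape, incr]
    | succ i => simp [addBox, shape_cons, incr, ih i x]

lemma flatten_length_shape {C : Type*} (t : List (List C)) :
    t.flatten.length = (shape t).sum := by
  simp [shape, List.length_flatten]

lemma incr_get?_self : ∀ (s : List ℕ) (i : ℕ), i ≤ s.length →
    (incr s i).get? i = some ((s.get? i).getD 0 + 1)
  | [], i, h => by
    have : i = 0 := by simpa using h
    subst this; simp [incr]
  | n :: ns, 0, _ => by simp [incr]
  | n :: ns, k + 1, h => by
    simpa [incr] using incr_get?_self ns k (by simpa using h)

variable {A : Type*} [LinearOrder A] {sg : A → ZMod 2}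

lemma rowOK_of_get? {q : List (List A)} (hq : IsSuperTableau sg q) (i : ℕ) :
    RowOK sg ((q.get? i).getD []) := by
  cases h : q.get? i with
  | none => exact List.chain'_nil
  | some r => exact hq.2.2.1 r (List.get?_mem h)

lemma shape_antitone {t : List (List A)} (ht : IsSuperTableau sg t) {k k' : ℕ}
    (hk : k ≤ k') {a b : ℕ} (ha : (shape t).get? k = some a)
    (hb : (shape t).get? k' = some b) : b ≤ a := by
  rcases eq_or_lt_of_le hk with rfl | h
  · rw [ha] at hb; cases hb; exact le_rfl
  · exact (chain'_iff_forall_get? (R := fun p q : ℕ => q ≤ p)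
      (fun a b c h1 h2 => le_trans h2 h1)).1 ht.2.1 k k' a b h ha hb

lemma addBox_tableau {q : List (List A)} {i : ℕ} {x : A}
    (hq : IsSuperTableau sg q) (hi : i ≤ q.length)
    (hsh : (incr (shape q) i).Chain' (fun p r => r ≤ p))
    (hrow : ∀ a ∈ (q.get? i).getD [], ¬ ltp sg x a)
    (hcol : 0 < i → ∀ a, (q.get? (i-1)).bind (·.get? ((q.get? i).getD []).length) = some a →
      ltp sg a x) :
    IsSuperTableau sg (addBox q i x) := by
  refine ⟨?_, ?_, ?_, ?_⟩
  · intro r' hr'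
    obtain ⟨k, hk⟩ := List.get?_of_mem hr'
    rw [addBox_get? q i x hi k] at hk
    split at hk
    · cases hk; simp
    · exact hq.1 r' (List.get?_mem hk)
  · rw [shape_addBox]; exact hsh
  · intro r' hr'
    obtain ⟨k, hk⟩ := List.get?_of_mem hr'
    rw [addBox_get? q i x hi k] at hk
    split at hk
    · cases hk
      exact rowOK_append (rowOK_of_get? hq i) hrow
    · exact hq.2.2.1 r' (List.get?_mem hk)
  · rw [chain'_iff_get?']
    intro k ra rb hra hrb
    rw [addBox_get? q i x hi k] at hra
    rw [addBox_get? q i x hi (k+1)] at hrb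
    have hqk1 : ∀ rb', q.get? (k+1) = some rb' →
        ColsOK sg ((q.get? k).getD []) rb' := by
      intro rb' hrb'
      have hqk : ∃ rk, q.get? k = some rk := by
        have h1 : k + 1 < q.length := (List.get?_eq_some.1 hrb').1
        rw [List.get?_eq_get (by omega)]
        exact ⟨_, rfl⟩
      obtain ⟨rk, hrk⟩ := hqk
      rw [hrk]
      exact chain'_iff_get?'.1 hq.2.2.2 k rk rb' hrk hrb'
    split at hra <;> split at hrb
    · omega
    · -- k = i : row i extended, row below unchanged
      rename_i hki _
      subst hki
      cases hra
      rw [colsOK_iff]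
      intro m b a hb ha
      have hm : m < ((q.get? k).getD []).length + 1 := by
        have := (List.get?_eq_some.1 hb).1
        simpa using this
      rcases lt_or_eq_of_le (Nat.lt_succ_iff.1 hm) with hm' | hm'
      · rw [List.get?_append hm'] at hb
        exact colsOK_iff.1 (hqk1 rb hrb) m b a hb ha
      · -- m = length of row i : the entry below the new box cannot exist
        exfalso
        subst hm'
        obtain ⟨rk, hrk⟩ : ∃ rk, q.get? k = some rk := by
          have h2 : k + 1 < q.length := (List.get?_eq_some.1 hrb).1
          rw [List.get?_eq_get (by omega)]
          exact ⟨_, rfl⟩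
        have h1 : (shape q).get? k = some ((q.get? k).getD []).length := by
          rw [shape_get?, hrk]
          rfl
        have h2 : (shape q).get? (k+1) = some rb.length := by
          rw [shape_get?, hrb]; rfl
        have h3 : rb.length ≤ ((q.get? k).getD []).length :=
          shape_antitone hq (Nat.le_succ k) h1 h2
        have h4 : ((q.get? k).getD []).length < rb.length := (List.get?_eq_some.1 ha).1
        omega
    · -- k + 1 = i : row above unchanged, row i extended
      rename_i hki hki1
      subst hki1
      cases hrb
      rw [colsOK_iff]
      intro m b a hb ha
      have hm : m < ((q.get? (k+1)).getD []).length + 1 := by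
        have := (List.get?_eq_some.1 ha).1
        simpa using this
      rcases lt_or_eq_of_le (Nat.lt_succ_iff.1 hm) with hm' | hm'
      · rw [List.get?_append hm'] at ha
        obtain ⟨ri, hri⟩ : ∃ ri, q.get? (k+1) = some ri := by
          cases hqi : q.get? (k+1) with
          | none => rw [hqi] at hm'; simp at hm'
          | some ri => exact ⟨ri, rfl⟩
        have hcc := chain'_iff_get?'.1 hq.2.2.2 k ra ri hra hri
        rw [hri] at ha
        exact colsOK_iff.1 hcc m b a hb ha
      · -- m = length of row i : compare with the new box via `hcol`
        subst hm'
        have haY : a = x := by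
          rw [List.get?_concat_length] at ha
          cases ha; rfl
        subst haY
        apply hcol (by omega)
        simp only [Nat.add_sub_cancel]
        rw [hra]
        simpa using hb
    · have h := hqk1 rb hrb
      rw [hra] at h
      simpa using h

end AuxAddBox
section AuxInv

variable {A B : Type*} [LinearOrder A] [LinearOrder B]

/-- Entry of a tableau at row `k`, column `j`. -/
def Ent (q : List (List A)) (k j : ℕ) (a : A) : Prop :=
  (q.get? k).bind (·.get? j) = some a

/-- The invariant carried along the RSK fold: `(x, y)` is the last processed
couple, `i` the row index of the last added box, `(t, q)` the current pair of
tableaux, `n` the number of processed couples. -/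
def RSKInv (sgA : A → ZMod 2) (sgB : B → ZMod 2) (x : A) (y : B) (i : ℕ)
    (t : List (List B)) (q : List (List A)) (n : ℕ) : Prop :=
  IsSuperTableau sgB t ∧ IsSuperTableau sgA q ∧ shape q = shape t ∧
  t.flatten.length = n ∧
  (∃ t₀, IsSuperTableau sgB t₀ ∧ rInsertIdx sgB t₀ y = (t, i)) ∧
  i < t.length ∧
  (∀ k j a, Ent q k j a →
    a < x ∨ (a = x ∧ (sgA x = 0 → j < ((shape t).get? i).getD 0) ∧ (sgA x = 1 → k ≤ i)))

variable {sgA : A → ZMod 2} {sgB : B → ZMod 2}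

lemma entAt {q : List (List A)} {k j : ℕ} {a : A}
    (h : ((q.get? k).getD []).get? j = some a) : Ent q k j a := by
  unfold Ent
  cases hq' : q.get? k with
  | none => rw [hq'] at h; simp at h
  | some r =>
    rw [hq'] at h
    simpa using h

lemma inv_step {x x' : A} {y y' : B} {i : ℕ} {t : List (List B)} {q : List (List A)} {n : ℕ}
    (hinv : RSKInv sgA sgB x y i t q n)
    (hrel : pairLt sgA (x, y) (x', y') ∨ ((x, y) = (x', y') ∧ sgA (x, y).1 + sgB (x, y).2 = 0)) :
    RSKInv sgA sgB x' y' (rInsertIdx sgB t y').2 (rInsertIdx sgB t y').1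
      (addBox q (rInsertIdx sgB t y').2 x') (n + 1) := by
  obtain ⟨Ht, Hq, Hsh, Hn, ⟨t₀, Ht₀, He₀⟩, Hi, Hx⟩ := hinv
  obtain ⟨Ht₂, Hsh₂, Hile⟩ := rInsert_tableau t Ht y'
  set t₂ := (rInsertIdx sgB t y').1 with ht₂
  set i₂ := (rInsertIdx sgB t y').2 with hi₂
  -- reduce the array condition to the three relevant cases
  have hcase : x < x' ∨ (x = x' ∧ sgA x' = 0 ∧ ¬ ltp sgB y' y)
      ∨ (x = x' ∧ sgA x' = 1 ∧ ltp sgB y' y) := by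
    rcases hrel with hpl | ⟨heq, hsig⟩
    · rcases hpl with hlt | ⟨heq, hd⟩
      · exact Or.inl hlt
      · rcases hd with ⟨h0, hyy'⟩ | ⟨h1, hy'y⟩
        · refine Or.inr (Or.inl ⟨heq, ?_, ?_⟩)
          · rw [← show x = x' from heq]; exact h0
          · intro hc
            exact absurd hyy' (not_lt.2 hc.le)
        · refine Or.inr (Or.inr ⟨heq, ?_, ltp_of_lt hy'y⟩)
          rw [← show x = x' from heq]; exact h1
    · have hx : x = x' := congrArg Prod.fst heq
      have hy : y = y' := congrArg Prod.snd heq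
      rcases zmod2_cases (sgA x) with h0 | h1
      · have hB : sgB y = 0 := by rwa [h0, zero_add] at hsig
        refine Or.inr (Or.inl ⟨hx, hx ▸ h0, ?_⟩)
        rw [← hy]
        unfold ltp
        rw [if_pos hB]
        exact lt_irrefl y
      · have hB : sgB y = 1 := by
          rcases zmod2_cases (sgB y) with h | h
          · rw [h1, h] at hsig; exact absurd hsig (by decide)
          · exact h
        refine Or.inr (Or.inr ⟨hx, hx ▸ h1, ?_⟩)
        rw [← hy]
        unfold ltp
        rw [if_neg (by rw [hB]; decide)]
  have hxle : x ≤ x' := by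
    rcases hcase with h | ⟨h, _, _⟩ | ⟨h, _, _⟩
    exacts [h.le, h.le, h.le]
  -- bookkeeping
  have hqlen : q.length = t.length := by
    have := congrArg List.length Hsh
    simpa [shape_length] using this
  have hiq : i₂ ≤ q.length := by rw [hqlen]; exact Hile
  have hshq₂ : shape t₂ = incr (shape q) i₂ := by rw [Hsh₂, Hsh]
  set L := ((shape t).get? i₂).getD 0 with hL
  have hLq : ((q.get? i₂).getD []).length = L := by
    have h1 : (shape q).get? i₂ = (shape t).get? i₂ := by rw [Hsh]
    rw [shape_get?] at h1
    cases hq' : q.get? i₂ with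
    | none =>
      rw [hq'] at h1
      rw [hL, ← h1]
      simp
    | some r =>
      rw [hq'] at h1
      rw [hL, ← h1]
      simp
  have hLt₂ : ((shape t₂).get? i₂).getD 0 = L + 1 := by
    rw [Hsh₂, incr_get?_self (shape t) i₂ (by rw [shape_length]; exact Hile)]
    rfl
  have hLle : i₂ ≤ i → ((shape t).get? i).getD 0 ≤ L := by
    intro hle
    obtain ⟨a, hai⟩ : ∃ a, (shape t).get? i = some a := by
      rw [List.get?_eq_get (by rw [shape_length]; exact Hi)]; exact ⟨_, rfl⟩
    obtain ⟨b, hbi⟩ : ∃ b, (shape t).get? i₂ = some b := by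
      rw [List.get?_eq_get (by rw [shape_length]; omega)]; exact ⟨_, rfl⟩
    have hab := shape_antitone Ht hle hbi hai
    rw [hai, hL, hbi]
    simpa using hab
  have hle2 : ¬ ltp sgB y' y → i₂ ≤ i := by
    intro hnl
    have h := bump_le t₀ Ht₀ y y' hnl
    rw [He₀] at h
    exact h
  have hgt3 : ltp sgB y' y → i < i₂ := by
    intro hl'
    have h := bump_gt t₀ Ht₀ y y' hl'
    rw [He₀] at h
    exact h
  have hshEq : shape (addBox q i₂ x') = shape t₂ := by rw [shape_addBox, hshq₂]
  have hflat : t₂.flatten.length = n + 1 := by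
    rw [flatten_length_shape, Hsh₂, incr_sum, ← flatten_length_shape, Hn]
  have hi₂lt : i₂ < t₂.length := by
    have h1 : i₂ < (incr (shape q) i₂).length :=
      lt_length_incr _ _ (by rw [shape_length]; exact hiq)
    rw [← hshq₂, shape_length] at h1
    exact h1
  refine ⟨Ht₂, addBox_tableau Hq hiq (by rw [← hshq₂]; exact Ht₂.2.1) ?_ ?_,
    hshEq, hflat, ⟨t, Ht, rfl⟩, hi₂lt, ?_⟩
  · -- row condition for the new box
    intro a ha
    obtain ⟨m, hm⟩ := List.get?_of_mem ha
    rcases Hx i₂ m a (entAt hm) with hlt | ⟨heq, hc0, hc1⟩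
    · exact not_ltp_iff.2 (Or.inl (lt_of_lt_of_le hlt hxle))
    · rcases hcase with h | ⟨hxx', h0, hnl⟩ | ⟨hxx', h1, hl'⟩
      · exact not_ltp_iff.2 (Or.inl (by rw [heq]; exact h))
      · exact not_ltp_iff.2 (Or.inr ⟨heq.trans hxx', by rw [heq.trans hxx']; exact h0⟩)
      · exfalso
        have hc := hc1 (by rw [hxx']; exact h1)
        have := hgt3 hl'
        omega
  · -- column condition for the new box
    intro _ a hE'
    have hE : Ent q (i₂ - 1) (((q.get? i₂).getD []).length) a := hE'
    rcases Hx _ _ _ hE with hlt | ⟨heq, hc0, hc1⟩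
    · exact ltp_of_lt (lt_of_lt_of_le hlt hxle)
    · rcases hcase with h | ⟨hxx', h0, hnl⟩ | ⟨hxx', h1, hl'⟩
      · exact ltp_of_lt (by rw [heq]; exact h)
      · exfalso
        have hc := hc0 (by rw [hxx']; exact h0)
        rw [hLq] at hc
        have := hLle (hle2 hnl)
        omega
      · exact ltp_iff_col.2 (Or.inr ⟨heq.trans hxx', by rw [heq.trans hxx']; exact h1⟩)
  · -- the invariant on the entries of the new recording tableau
    intro k j a hE
    unfold Ent at hE
    rw [addBox_get? q i₂ x' hiq k] at hE
    by_cases hk : k = i₂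
    · rw [if_pos hk] at hE
      have hE'' : (((q.get? i₂).getD []) ++ [x']).get? j = some a := hE
      have hjlt : j < ((q.get? i₂).getD []).length + 1 := by
        have := (List.get?_eq_some.1 hE'').1
        simpa using this
      rcases lt_or_eq_of_le (Nat.lt_succ_iff.1 hjlt) with hj | hj
      · rw [List.get?_append hj] at hE''
        rcases Hx i₂ j a (entAt hE'') with hlt | ⟨heq, hc0, hc1⟩
        · exact Or.inl (lt_of_lt_of_le hlt hxle)
        · rcases hcase with h | ⟨hxx', h0, hnl⟩ | ⟨hxx', h1, hl'⟩
          · exact Or.inl (by rw [heq]; exact h)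
          · refine Or.inr ⟨heq.trans hxx', ?_, ?_⟩
            · intro _
              rw [hLt₂]
              have hc := hc0 (by rw [hxx']; exact h0)
              have := hLle (hle2 hnl)
              omega
            · intro hcon
              rw [h0] at hcon
              exact absurd hcon (by decide)
          · refine Or.inr ⟨heq.trans hxx', ?_, ?_⟩
            · intro hcon
              rw [h1] at hcon
              exact absurd hcon (by decide)
            · intro _
              exact hk.le
      · have haX : a = x' := by
          rw [hj, List.get?_concat_length] at hE''
          cases hE''
          rfl
        refine Or.inr ⟨haX, ?_, ?_⟩
        · intro _
          rw [hLt₂, ← hj, hLq] at *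
          omega
        · intro _
          exact hk.le
    · rw [if_neg hk] at hE
      rcases Hx k j a hE with hlt | ⟨heq, hc0, hc1⟩
      · exact Or.inl (lt_of_lt_of_le hlt hxle)
      · rcases hcase with h | ⟨hxx', h0, hnl⟩ | ⟨hxx', h1, hl'⟩
        · exact Or.inl (by rw [heq]; exact h)
        · refine Or.inr ⟨heq.trans hxx', ?_, ?_⟩
          · intro _
            rw [hLt₂]
            have hc := hc0 (by rw [hxx']; exact h0)
            have := hLle (hle2 hnl)
            omega
          · intro hcon
            rw [h0] at hcon
            exact absurd hcon (by decide)
        · refine Or.inr ⟨heq.trans hxx', ?_, ?_⟩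
          · intro hcon
            rw [h1] at hcon
            exact absurd hcon (by decide)
          · intro _
            have hc := hc1 (by rw [hxx']; exact h1)
            have := hgt3 hl'
            omega

lemma inv_base (x : A) (y : B) : RSKInv sgA sgB x y 0 [[y]] [[x]] 1 := by
  refine ⟨⟨by simp, ?_, by simp [RowOK], ?_⟩, ⟨by simp, ?_, by simp [RowOK], ?_⟩,
    rfl, rfl, ⟨[], ⟨by simp, ?_, by simp, List.chain'_nil⟩, rfl⟩, by simp, ?_⟩
  · exact List.chain'_singleton _
  · exact List.chain'_singleton _
  · exact List.chain'_singleton _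
  · exact List.chain'_singleton _
  · show List.Chain' _ (shape ([] : List (List B)))
    exact List.chain'_nil
  · intro k j a hE
    unfold Ent at hE
    rcases k with _ | k
    · rcases j with _ | j
      · simp at hE
        refine Or.inr ⟨hE.symm, by simp [shape], by simp⟩
      · simp at hE
    · simp at hE

lemma inv_fold :
    ∀ (w : List (A × B)) (x : A) (y : B) (i : ℕ) (t : List (List B)) (q : List (List A)) (n : ℕ),
      RSKInv sgA sgB x y i t q n →
      List.Chain (fun p r => pairLt sgA p r ∨ (p = r ∧ sgA p.1 + sgB p.2 = 0)) (x, y) w →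
      ∃ x' y' i',
        RSKInv sgA sgB x' y' i'
          (w.foldl (fun p xy =>
            let r := rInsertIdx sgB p.1 xy.2
            (r.1, addBox p.2 r.2 xy.1)) (t, q)).1
          (w.foldl (fun p xy =>
            let r := rInsertIdx sgB p.1 xy.2
            (r.1, addBox p.2 r.2 xy.1)) (t, q)).2
          (n + w.length) := by
  intro w
  induction w with
  | nil =>
    intro x y i t q n hinv _
    exact ⟨x, y, i, by simpa using hinv⟩
  | cons p w' ih =>
    intro x y i t q n hinv hch
    obtain ⟨x', y'⟩ := p
    unfold List.Chain at hch
    rcases hch with _ | _ | ⟨hrel, hch'⟩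
    have hstep := inv_step hinv hrel
    have := ih x' y' (rInsertIdx sgB t y').2 (rInsertIdx sgB t y').1
      (addBox q (rInsertIdx sgB t y').2 x') (n + 1) hstep hch'
    obtain ⟨x'', y'', i'', hinv''⟩ := this
    refine ⟨x'', y'', i'', ?_⟩
    have harith : n + 1 + w'.length = n + (w'.length + 1) := by omega
    rw [List.foldl_cons]
    simpa [harith] using hinv''

end AuxInv
/-- The recording filling `Q(w)` of a signed two-rowed array is a super
tableau over `Σ`, of the same shape as `T(w)`, and both contain `k` boxes. -/
theorem superRSK_recording_is_superTableau
    {A B : Type*} [LinearOrder A] [Countable A] [LinearOrder B] [Countable B]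
    (sgA : A → ZMod 2) (sgB : B → ZMod 2)
    (w : List (A × B)) (hw : IsSignedArray sgA sgB w) :
    IsSuperTableau sgA (RSK sgB w).2 ∧
    shape (RSK sgB w).1 = shape (RSK sgB w).2 ∧
    (RSK sgB w).1.flatten.length = w.length ∧
    (RSK sgB w).2.flatten.length = w.length := by
  rcases w with _ | ⟨⟨x, y⟩, w'⟩
  · have h : RSK sgB ([] : List (A × B)) = ([], []) := rfl
    rw [h]
    exact ⟨⟨by simp, List.chain'_nil, by simp, List.chain'_nil⟩, rfl, rfl, rfl⟩
  · have hchain : List.Chain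
        (fun p r => pairLt sgA p r ∨ (p = r ∧ sgA p.1 + sgB p.2 = 0)) (x, y) w' := hw
    have h0 : RSK sgB ((x, y) :: w')
        = w'.foldl (fun p xy =>
            let r := rInsertIdx sgB p.1 xy.2
            (r.1, addBox p.2 r.2 xy.1)) ([[y]], [[x]]) := rfl
    obtain ⟨x', y', i', hinv⟩ := inv_fold w' x y 0 [[y]] [[x]] 1 (inv_base x y) hchain
    obtain ⟨Ht, Hq, Hsh, Hn, -, -, -⟩ := hinv
    rw [h0]
    refine ⟨Hq, Hsh.symm, ?_, ?_⟩
    · rw [Hn]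
      simp [Nat.add_comm]
    · rw [flatten_length_shape, Hsh, ← flatten_length_shape, Hn]
      simp [Nat.add_comm]
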